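/- Let d ≥ 2 be an integer, 1 < α < 2, 0 < γ ≤ 2, and let β ∈ (αγ/2, d+γ]. There exists a constant K > 0, depending only on d, α, γ, β, such that for every nonnegative f ∈ C_c(ℝ^{d+1}), every (t,x) ∈ ℝ × ℝ^d and every ρ > 0, P_γ(1_{C_ρ(t,x)^c} f)(t,x) ≤ K ρ^{αγ/2 − β} M_β f(t,x). -/

import Mathlib

open MeasureTheory ENNReal Set Filter

noncomputable section

/-- The spatial space `ℝ^d`. -/
abbrev Spc (d : ℕ) := EuclideanSpace ℝ (Fin d)

/-- Parabolic cylinder `C_ρ(t,x) = {(s,y) : t ≤ s ≤ t + ρ^α, |y - x| ≤ ρ}`. -/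
def cylP (d : ℕ) (α ρ t : ℝ) (x : Spc d) : Set (ℝ × Spc d) :=
  {p | t ≤ p.1 ∧ p.1 ≤ t + ρ ^ α ∧ dist p.2 x ≤ ρ}

/-- Average of `f` over the parabolic cylinder `C_ρ(t,x)`. -/
def cylAvg (d : ℕ) (α ρ t : ℝ) (x : Spc d) (f : ℝ × Spc d → ℝ≥0∞) : ℝ≥0∞ :=
  (volume (cylP d α ρ t x))⁻¹ * ∫⁻ p in cylP d α ρ t x, f p

/-- Parabolic Morrey norm `‖v‖_{E_q}`. -/
def morreyE (d : ℕ) (α q : ℝ) (v : ℝ × Spc d → ℝ≥0∞) : ℝ≥0∞ :=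
  ⨆ (ρ : ℝ) (_ : 0 < ρ) (t : ℝ) (x : Spc d),
    ENNReal.ofReal ρ * (cylAvg d α ρ t x (fun p => v p ^ q)) ^ (1 / q)

/-- Elliptic Morrey norm `‖w‖_{M_q}` on `ℝ^d`. -/
def morreyM (d : ℕ) (q : ℝ) (w : Spc d → ℝ≥0∞) : ℝ≥0∞ :=
  ⨆ (ρ : ℝ) (_ : 0 < ρ) (x : Spc d),
    ENNReal.ofReal ρ *
      ((volume (Metric.closedBall x ρ))⁻¹ *
        ∫⁻ y in Metric.closedBall x ρ, w y ^ q) ^ (1 / q)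

/-- Fractional (parabolic) maximal function `M_β f(t,x)`. -/
def maxFun (d : ℕ) (α β : ℝ) (f : ℝ × Spc d → ℝ≥0∞) (t : ℝ) (x : Spc d) : ℝ≥0∞ :=
  ⨆ (ρ : ℝ) (_ : 0 < ρ), ENNReal.ofReal (ρ ^ β) * cylAvg d α ρ t x f

/-- Uncentered parabolic maximal function `M̂ f(z)`, sup over all parabolic
cylinders containing `z`. -/
def hatM (d : ℕ) (α : ℝ) (f : ℝ × Spc d → ℝ≥0∞) (z : ℝ × Spc d) : ℝ≥0∞ :=
  ⨆ (ρ : ℝ) (_ : 0 < ρ) (t : ℝ) (x : Spc d) (_ : z ∈ cylP d α ρ t x),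
    cylAvg d α ρ t x f

/-- The kernel `p_γ(s,y) = 1_{s>0} s^{γ/2} min(|y|^{-d-α}, s^{-(d+α)/α})`. -/
def pKer (d : ℕ) (α γ : ℝ) (s : ℝ) (y : Spc d) : ℝ≥0∞ :=
  if 0 < s then
    (if s ^ (1 / α) ≤ ‖y‖ then ENNReal.ofReal (s ^ (γ / 2) * ‖y‖ ^ (-(d : ℝ) - α))
     else ENNReal.ofReal (s ^ (γ / 2 - ((d : ℝ) + α) / α)))
  else 0

/-- `P_γ f(t,x) = ∫ p_γ(s,y) f(t+s, x+y) dy ds`. -/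
def Pop (d : ℕ) (α γ : ℝ) (f : ℝ × Spc d → ℝ≥0∞) (t : ℝ) (x : Spc d) : ℝ≥0∞ :=
  ∫⁻ p : ℝ × Spc d, pKer d α γ p.1 p.2 * f (t + p.1, x + p.2)

/-- `P*_γ f(t,x) = ∫ p_γ(s,y) f(t-s, x+y) dy ds`. -/
def PopStar (d : ℕ) (α γ : ℝ) (f : ℝ × Spc d → ℝ≥0∞) (t : ℝ) (x : Spc d) : ℝ≥0∞ :=
  ∫⁻ p : ℝ × Spc d, pKer d α γ p.1 p.2 * f (t - p.1, x + p.2)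



section AuxStmt1

open Metric

lemma cylP_eq_prod' (d : ℕ) (α ρ t : ℝ) (x : Spc d) :
    cylP d α ρ t x = Set.Icc t (t + ρ ^ α) ×ˢ Metric.closedBall x ρ := by
  ext p; simp [cylP, Set.mem_Icc, and_assoc]

lemma measurableSet_cylP' (d : ℕ) (α ρ t : ℝ) (x : Spc d) :
    MeasurableSet (cylP d α ρ t x) := by
  rw [cylP_eq_prod']; exact measurableSet_Icc.prod measurableSet_closedBall

lemma volume_cylP' (d : ℕ) (α : ℝ) {ρ : ℝ} (hρ : 0 < ρ) (t : ℝ) (x : Spc d) :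
    volume (cylP d α ρ t x)
      = ENNReal.ofReal (ρ ^ α * ρ ^ (d : ℝ)) * volume (Metric.ball (0 : Spc d) 1) := by
  rw [cylP_eq_prod', Measure.volume_eq_prod, Measure.prod_prod, Real.volume_Icc,
    Measure.addHaar_closedBall volume x hρ.le, add_sub_cancel_left,
    finrank_euclideanSpace_fin, ← Real.rpow_natCast ρ d,
    ENNReal.ofReal_mul (by positivity), mul_assoc]

lemma lintegral_shift' (d : ℕ) (F : ℝ × Spc d → ℝ≥0∞) (z : ℝ × Spc d) (S : Set (ℝ × Spc d)) :
    ∫⁻ p in S, F (z + p) = ∫⁻ w in (fun p => z + p) '' S, F w := by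
  haveI : (volume : Measure (ℝ × Spc d)).IsAddLeftInvariant := by
    rw [Measure.volume_eq_prod]; infer_instance
  exact (measurePreserving_add_left volume z).setLIntegral_comp_emb
    (MeasurableEquiv.addLeft z).measurableEmbedding F S

lemma image_shift_cyl0' (d : ℕ) (α R t : ℝ) (x : Spc d) :
    (fun p => ((t, x) : ℝ × Spc d) + p) '' cylP d α R 0 0 = cylP d α R t x := by
  ext w
  constructor
  · rintro ⟨p, hp, rfl⟩
    obtain ⟨h1, h2, h3⟩ := hp
    simp only [cylP, Set.mem_setOf_eq] at *
    refine ⟨by simpa using h1, by rw [zero_add] at h2; simpa using h2, ?_⟩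
    show dist (x + p.2) x ≤ R
    simpa [dist_eq_norm] using h3
  · intro hw
    obtain ⟨h1, h2, h3⟩ := hw
    refine ⟨w - (t, x), ⟨?_, ?_, ?_⟩, by show (t,x) + (w - (t,x)) = w; abel⟩
    · show (0:ℝ) ≤ w.1 - t; linarith
    · show w.1 - t ≤ 0 + R ^ α; linarith
    · show dist (w.2 - x) 0 ≤ R
      simpa [dist_eq_norm] using h3

lemma mem_cylP_shift' (d : ℕ) (α ρ t : ℝ) (x : Spc d) (p : ℝ × Spc d) :
    ((t, x) + p) ∈ cylP d α ρ t x ↔ p ∈ cylP d α ρ 0 0 := by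
  simp only [cylP, Set.mem_setOf_eq, Prod.fst_add, Prod.snd_add]
  constructor <;> rintro ⟨h1, h2, h3⟩
  · refine ⟨by linarith, by rw [zero_add]; linarith, ?_⟩
    rw [dist_zero_right]
    simpa [dist_eq_norm] using h3
  · refine ⟨by simpa using h1, by rw [zero_add] at h2; simpa using h2, ?_⟩
    show dist (x + p.2) x ≤ ρ
    simpa [dist_eq_norm] using h3

lemma pKer_le' (d : ℕ) {α γ : ℝ} (hα : 1 < α) (hγ : 0 < γ) {r s : ℝ} {y : Spc d}
    (hr : 0 < r) (hs : 0 < s) (hsR : s ≤ (2 * r) ^ α) (hout : r ^ α < s ∨ r < ‖y‖) :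
    pKer d α γ s y ≤ ENNReal.ofReal ((2 * r) ^ (α * γ / 2) * r ^ (-(d : ℝ) - α)) := by
  have hα0 : (0:ℝ) < α := by linarith
  have h2r : (0:ℝ) < 2 * r := by linarith
  have hs2 : s ^ (γ / 2) ≤ (2 * r) ^ (α * γ / 2) := by
    calc s ^ (γ / 2) ≤ ((2 * r) ^ α) ^ (γ / 2) :=
          Real.rpow_le_rpow hs.le hsR (by positivity)
      _ = (2 * r) ^ (α * γ / 2) := by
          rw [← Real.rpow_mul h2r.le, mul_div_assoc]
  have hexp : -(d : ℝ) - α ≤ 0 := by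
    have : (0:ℝ) ≤ d := Nat.cast_nonneg d
    linarith
  unfold pKer
  rw [if_pos hs]
  split_ifs with hyle
  · have hry : r < ‖y‖ := by
      rcases hout with h | h
      · have h2 : s ≤ ‖y‖ ^ α := by
          have h3 := Real.rpow_le_rpow (by positivity) hyle hα0.le
          rwa [← Real.rpow_mul hs.le, one_div, inv_mul_cancel₀ hα0.ne', Real.rpow_one] at h3
        have h4 : r ^ α < ‖y‖ ^ α := lt_of_lt_of_le h h2
        by_contra hc
        push_neg at hc
        exact absurd (Real.rpow_le_rpow (norm_nonneg y) hc hα0.le) (not_le.2 h4)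
      · exact h
    apply ENNReal.ofReal_le_ofReal
    exact mul_le_mul hs2 (Real.rpow_le_rpow_of_nonpos hr hry.le hexp)
      (by positivity) (by positivity)
  · push_neg at hyle
    have hrs : r ^ α < s := by
      rcases hout with h | h
      · exact h
      · have h5 : r < s ^ (1 / α) := lt_trans h hyle
        have h6 := Real.rpow_lt_rpow hr.le h5 hα0
        rwa [← Real.rpow_mul hs.le, one_div, inv_mul_cancel₀ hα0.ne', Real.rpow_one] at h6
    apply ENNReal.ofReal_le_ofReal
    have heq : s ^ (γ / 2 - ((d : ℝ) + α) / α) = s ^ (γ / 2) * s ^ (-(((d:ℝ) + α) / α)) := by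
      rw [← Real.rpow_add hs]; ring_nf
    rw [heq]
    have hneg : -(((d:ℝ) + α) / α) ≤ 0 := by
      apply neg_nonpos.mpr; positivity
    have h7 : s ^ (-(((d:ℝ) + α) / α)) ≤ (r ^ α) ^ (-(((d:ℝ) + α) / α)) :=
      Real.rpow_le_rpow_of_nonpos (by positivity) hrs.le hneg
    have h8 : (r ^ α) ^ (-(((d:ℝ) + α) / α)) = r ^ (-(d:ℝ) - α) := by
      rw [← Real.rpow_mul hr.le]
      congr 1
      field_simp
      ring
    exact mul_le_mul hs2 (h8 ▸ h7) (by positivity) (by positivity)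

lemma cyl_lintegral_le' (d : ℕ) (α β : ℝ) {R : ℝ} (hR : 0 < R) (t : ℝ) (x : Spc d)
    (F : ℝ × Spc d → ℝ≥0∞) :
    ∫⁻ w in cylP d α R t x, F w ≤
      ENNReal.ofReal (R ^ α * R ^ (d:ℝ)) * volume (Metric.ball (0:Spc d) 1) *
        (ENNReal.ofReal (R ^ (-β)) * maxFun d α β F t x) := by
  have hvol := volume_cylP' d α hR t x
  have hv0 : volume (cylP d α R t x) ≠ 0 := by
    rw [hvol]
    exact (ENNReal.mul_pos (ENNReal.ofReal_pos.2 (by positivity)).ne'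
      (Metric.measure_ball_pos _ _ one_pos).ne').ne'
  have hvtop : volume (cylP d α R t x) ≠ ⊤ := by
    rw [hvol]
    exact ENNReal.mul_ne_top ENNReal.ofReal_ne_top measure_ball_lt_top.ne
  have h1 : ENNReal.ofReal (R ^ β) * cylAvg d α R t x F ≤ maxFun d α β F t x :=
    le_iSup_of_le R (le_iSup_of_le hR le_rfl)
  have h2 : cylAvg d α R t x F ≤ ENNReal.ofReal (R ^ (-β)) * maxFun d α β F t x := by
    have hprod : ENNReal.ofReal (R ^ (-β)) * ENNReal.ofReal (R ^ β) = 1 := by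
      rw [← ENNReal.ofReal_mul (by positivity), ← Real.rpow_add hR, neg_add_cancel,
        Real.rpow_zero, ENNReal.ofReal_one]
    calc cylAvg d α R t x F
        = (ENNReal.ofReal (R ^ (-β)) * ENNReal.ofReal (R ^ β)) * cylAvg d α R t x F := by
          rw [hprod, one_mul]
      _ = ENNReal.ofReal (R ^ (-β)) * (ENNReal.ofReal (R ^ β) * cylAvg d α R t x F) := by
          ring
      _ ≤ _ := mul_le_mul_right h1 _
  calc ∫⁻ w in cylP d α R t x, F w
      = volume (cylP d α R t x) * cylAvg d α R t x F := by
        rw [cylAvg, ← mul_assoc, ENNReal.mul_inv_cancel hv0 hvtop, one_mul]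
    _ ≤ volume (cylP d α R t x) * (ENNReal.ofReal (R ^ (-β)) * maxFun d α β F t x) :=
        mul_le_mul_right h2 _
    _ = _ := by rw [hvol]

lemma rpow_combine' {u : ℝ} (hu : 0 < u) (a α' dd β : ℝ) :
    (2*u)^a * u^(-dd-α') * ((2*u)^α' * (2*u)^dd) * (2*u)^(-β)
      = 2^(a+α'+dd-β) * u^(a-β) := by
  have h2u : (0:ℝ) < 2*u := by linarith
  have e2 : ∀ x y : ℝ, (2:ℝ)^(x+y) = 2^x * 2^y := fun x y => Real.rpow_add two_pos x y
  have eu : ∀ x y : ℝ, u^(x+y) = u^x * u^y := fun x y => Real.rpow_add hu x y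
  rw [show a+α'+dd-β = a+α'+dd+(-β) by ring, e2, e2, e2,
      show a-β = (a + (-dd-α')) + (α' + (dd + (-β))) by ring, eu, eu, eu, eu,
      Real.mul_rpow two_pos.le hu.le, Real.mul_rpow two_pos.le hu.le,
      Real.mul_rpow two_pos.le hu.le, Real.mul_rpow two_pos.le hu.le]
  ring

end AuxStmt1

/-- far-field bound for `P_γ` applied to `f` cut off outside the cylinder
`C_ρ(t,x)`: `P_γ(1_{C_ρ(t,x)^c} f)(t,x) ≤ K ρ^{αγ/2 - β} M_β f(t,x)`. -/
theorem stmt_1 (d : ℕ) (hd : 2 ≤ d) (α γ β : ℝ) (hα1 : 1 < α) (hα2 : α < 2)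
    (hγ1 : 0 < γ) (hγ2 : γ ≤ 2) (hβ1 : α * γ / 2 < β) (hβ2 : β ≤ d + γ) :
    ∃ K : ℝ, 0 < K ∧
      ∀ (f : ℝ × Spc d → ℝ), Continuous f → HasCompactSupport f → (∀ z, 0 ≤ f z) →
      ∀ (t : ℝ) (x : Spc d) (ρ : ℝ), 0 < ρ →
      Pop d α γ
          (fun z => Set.indicator (cylP d α ρ t x)ᶜ (fun w => ENNReal.ofReal (f w)) z) t x ≤
        ENNReal.ofReal (K * ρ ^ (α * γ / 2 - β)) *
          maxFun d α β (fun z => ENNReal.ofReal (f z)) t x := by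
  classical
  have hα0 : (0:ℝ) < α := by linarith
  set V : ℝ≥0∞ := volume (Metric.ball (0 : Spc d) 1) with hV
  have hV0 : V ≠ 0 := (Metric.measure_ball_pos _ _ one_pos).ne'
  have hVtop : V ≠ ⊤ := measure_ball_lt_top.ne
  set q : ℝ := (2:ℝ) ^ (α * γ / 2 - β) with hq
  have hq0 : 0 < q := Real.rpow_pos_of_pos two_pos _
  have hq1 : q < 1 := Real.rpow_lt_one_of_one_lt_of_neg one_lt_two (by linarith)
  have hVt0 : 0 < V.toReal := ENNReal.toReal_pos hV0 hVtop
  refine ⟨(2:ℝ) ^ (α * γ / 2 + α + (d:ℝ) - β) * (1 - q)⁻¹ * V.toReal, ?_, ?_⟩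
  · exact mul_pos (mul_pos (Real.rpow_pos_of_pos two_pos _) (inv_pos.2 (by linarith))) hVt0
  intro f hf hfc hf0 t x ρ hρ
  set F : ℝ × Spc d → ℝ≥0∞ := fun w => ENNReal.ofReal (f w) with hF
  have hFz : Measurable fun p : ℝ × Spc d => F ((t, x) + p) :=
    ENNReal.measurable_ofReal.comp
      ((hf.comp (continuous_const.add continuous_id)).measurable)
  set r : ℕ → ℝ := fun k => 2 ^ k * ρ with hrdef
  have hrpos : ∀ k, 0 < r k := fun k => mul_pos (pow_pos two_pos k) hρ
  have hrsucc : ∀ k, r (k + 1) = 2 * r k := fun k => by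
    simp only [hrdef]; rw [pow_succ]; ring
  set D : ℕ → Set (ℝ × Spc d) :=
    fun k => cylP d α (r (k + 1)) 0 0 \ cylP d α (r k) 0 0 with hD
  have hDm : ∀ k, MeasurableSet (D k) := fun k =>
    (measurableSet_cylP' d α (r (k + 1)) 0 0).diff (measurableSet_cylP' d α (r k) 0 0)
  set B : ℕ → ℝ≥0∞ :=
    fun k => ENNReal.ofReal ((2 * r k) ^ (α * γ / 2) * (r k) ^ (-(d:ℝ) - α)) with hB
  set M := maxFun d α β F t x with hM
  -- pointwise bound
  have key : ∀ p : ℝ × Spc d,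
      pKer d α γ p.1 p.2 * Set.indicator (cylP d α ρ t x)ᶜ F ((t, x) + p)
        ≤ ∑' k, (D k).indicator (fun s => B k * F ((t, x) + s)) p := by
    intro p
    by_cases hs : 0 < p.1
    · by_cases hmem : ((t, x) + p) ∈ cylP d α ρ t x
      · rw [Set.indicator_of_notMem (Set.notMem_compl_iff.2 hmem), mul_zero]
        exact zero_le
      · have hp0 : p ∉ cylP d α ρ 0 0 := fun h =>
          hmem ((mem_cylP_shift' d α ρ t x p).2 h)
        have hex : ∃ k, p ∈ cylP d α (r (k + 1)) 0 0 := by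
          obtain ⟨n, hn⟩ :=
            pow_unbounded_of_one_lt ((max 1 (max p.1 ‖p.2‖)) / ρ) (one_lt_two (α := ℝ))
          have hCn : max 1 (max p.1 ‖p.2‖) < r n := by
            rw [hrdef]
            exact (div_lt_iff₀ hρ).1 hn
          have hmono : r n ≤ r (n + 1) := by
            rw [hrsucc]; linarith [hrpos n]
          have hR1 : (1:ℝ) ≤ r (n + 1) :=
            le_trans (le_trans (le_max_left _ _) hCn.le) hmono
          have hp1 : p.1 ≤ r (n + 1) :=
            le_trans (le_trans (le_trans (le_max_left _ _) (le_max_right _ _)) hCn.le) hmono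
          have hp2 : ‖p.2‖ ≤ r (n + 1) :=
            le_trans (le_trans (le_trans (le_max_right _ _) (le_max_right _ _)) hCn.le) hmono
          have hRα : r (n + 1) ≤ (r (n + 1)) ^ α := by
            nth_rewrite 1 [← Real.rpow_one (r (n + 1))]
            exact Real.rpow_le_rpow_of_exponent_le hR1 hα1.le
          refine ⟨n, hs.le, by rw [zero_add]; linarith, ?_⟩
          rw [dist_zero_right]; exact hp2
        have hk1 : p ∈ cylP d α (r (Nat.find hex + 1)) 0 0 := Nat.find_spec hex
        have hk0 : p ∉ cylP d α (r (Nat.find hex)) 0 0 := by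
          rcases Nat.eq_zero_or_pos (Nat.find hex) with h0 | hpos
          · have hr0 : r 0 = ρ := by simp [hrdef]
            rw [h0, hr0]; exact hp0
          · have hmin := Nat.find_min hex (Nat.sub_lt hpos one_pos)
            have heq : Nat.find hex - 1 + 1 = Nat.find hex := by omega
            rwa [heq] at hmin
        have hpD : p ∈ D (Nat.find hex) := ⟨hk1, hk0⟩
        have hker : pKer d α γ p.1 p.2 ≤ B (Nat.find hex) := by
          apply pKer_le' d hα1 hγ1 (hrpos _) hs
          · have h2 := hk1.2.1
            rw [zero_add, hrsucc] at h2
            exact h2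
          · by_contra hcon
            push_neg at hcon
            obtain ⟨h1, h2⟩ := hcon
            refine hk0 ⟨hs.le, by rw [zero_add]; exact h1, ?_⟩
            rw [dist_zero_right]; exact h2
        calc pKer d α γ p.1 p.2 * Set.indicator (cylP d α ρ t x)ᶜ F ((t, x) + p)
            ≤ pKer d α γ p.1 p.2 * F ((t, x) + p) :=
              mul_le_mul_right (Set.indicator_le_self _ _ _) _
          _ ≤ B (Nat.find hex) * F ((t, x) + p) := mul_le_mul_left hker _
          _ = (D (Nat.find hex)).indicator (fun s => B (Nat.find hex) * F ((t, x) + s)) p :=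
              (Set.indicator_of_mem hpD (fun s => B (Nat.find hex) * F ((t, x) + s))).symm
          _ ≤ _ := ENNReal.le_tsum (f := fun k => (D k).indicator (fun s => B k * F ((t, x) + s)) p) (Nat.find hex)
    · have h0 : pKer d α γ p.1 p.2 = 0 := by rw [pKer, if_neg hs]
      rw [h0, zero_mul]
      exact zero_le
  -- the coefficient sequence
  set c : ℕ → ℝ := fun k =>
    (2 * r k) ^ (α * γ / 2) * (r k) ^ (-(d:ℝ) - α) *
      ((r (k + 1)) ^ α * (r (k + 1)) ^ ((d:ℝ))) * (r (k + 1)) ^ (-β) with hc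
  have hceq : ∀ k, c k =
      ((2:ℝ) ^ (α * γ / 2 + α + (d:ℝ) - β) * ρ ^ (α * γ / 2 - β)) * q ^ k := by
    intro k
    rw [hc]
    simp only [hrsucc]
    rw [rpow_combine' (hrpos k) (α * γ / 2) α (d:ℝ) β]
    have hru : r k = 2 ^ k * ρ := rfl
    rw [hru, Real.mul_rpow (by positivity) hρ.le,
      ← Real.rpow_natCast (2:ℝ) k, ← Real.rpow_mul (by norm_num : (0:ℝ) ≤ 2),
      mul_comm (k:ℝ) (α * γ / 2 - β), Real.rpow_mul (by norm_num : (0:ℝ) ≤ 2),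
      Real.rpow_natCast, hq]
    ring
  have hcnonneg : ∀ k, 0 ≤ c k := fun k => by
    rw [hceq k]
    exact mul_nonneg (mul_nonneg (Real.rpow_pos_of_pos two_pos _).le
      (Real.rpow_nonneg hρ.le _)) (pow_nonneg hq0.le k)
  have hcsummable : Summable c := by
    have := (summable_geometric_of_lt_one hq0.le hq1).mul_left
      ((2:ℝ) ^ (α * γ / 2 + α + (d:ℝ) - β) * ρ ^ (α * γ / 2 - β))
    exact this.congr fun k => (hceq k).symm
  have hctsum : ∑' k, c k =
      (2:ℝ) ^ (α * γ / 2 + α + (d:ℝ) - β) * ρ ^ (α * γ / 2 - β) * (1 - q)⁻¹ := by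
    rw [tsum_congr hceq, tsum_mul_left, tsum_geometric_of_lt_one hq0.le hq1]
  -- main chain
  calc Pop d α γ (fun z => Set.indicator (cylP d α ρ t x)ᶜ F z) t x
      = ∫⁻ p : ℝ × Spc d,
          pKer d α γ p.1 p.2 * Set.indicator (cylP d α ρ t x)ᶜ F ((t, x) + p) := rfl
    _ ≤ ∫⁻ p, ∑' k, (D k).indicator (fun s => B k * F ((t, x) + s)) p :=
        lintegral_mono key
    _ = ∑' k, ∫⁻ p, (D k).indicator (fun s => B k * F ((t, x) + s)) p :=
        lintegral_tsum fun k => ((hFz.const_mul (B k)).indicator (hDm k)).aemeasurable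
    _ = ∑' k, ∫⁻ p in D k, B k * F ((t, x) + p) := by
        exact tsum_congr fun k => lintegral_indicator (hDm k) _
    _ ≤ ∑' k, B k * ∫⁻ w in cylP d α (r (k + 1)) t x, F w := by
        refine ENNReal.tsum_le_tsum fun k => ?_
        rw [lintegral_const_mul'' (B k) hFz.aemeasurable]
        refine mul_le_mul_right ?_ _
        calc ∫⁻ p in D k, F ((t, x) + p)
            ≤ ∫⁻ p in cylP d α (r (k + 1)) 0 0, F ((t, x) + p) :=
              lintegral_mono_set Set.diff_subset
          _ = ∫⁻ w in cylP d α (r (k + 1)) t x, F w := by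
              rw [lintegral_shift' d F (t, x), image_shift_cyl0']
    _ ≤ ∑' k, B k * (ENNReal.ofReal ((r (k + 1)) ^ α * (r (k + 1)) ^ (d:ℝ)) * V *
          (ENNReal.ofReal ((r (k + 1)) ^ (-β)) * M)) :=
        ENNReal.tsum_le_tsum fun k =>
          mul_le_mul_right (cyl_lintegral_le' d α β (hrpos (k + 1)) t x F) _
    _ = ∑' k, ENNReal.ofReal (c k) * (V * M) := by
        refine tsum_congr fun k => ?_
        rw [hc]
        have hnn1 : 0 ≤ (2 * r k) ^ (α * γ / 2) * (r k) ^ (-(d:ℝ) - α) :=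
          mul_nonneg (Real.rpow_nonneg (by linarith [hrpos k]) _)
            (Real.rpow_nonneg (hrpos k).le _)
        have hnn2 : 0 ≤ (r (k + 1)) ^ α * (r (k + 1)) ^ ((d:ℝ)) :=
          mul_nonneg (Real.rpow_nonneg (hrpos (k + 1)).le _)
            (Real.rpow_nonneg (hrpos (k + 1)).le _)
        rw [ENNReal.ofReal_mul (mul_nonneg hnn1 hnn2), ENNReal.ofReal_mul hnn1]
        ring
    _ = ENNReal.ofReal (∑' k, c k) * (V * M) := by
        rw [ENNReal.tsum_mul_right, ENNReal.ofReal_tsum_of_nonneg hcnonneg hcsummable]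
    _ = ENNReal.ofReal ((2:ℝ) ^ (α * γ / 2 + α + (d:ℝ) - β) * (1 - q)⁻¹ * V.toReal *
          ρ ^ (α * γ / 2 - β)) * M := by
        have hCnn : (0:ℝ) ≤ (2:ℝ) ^ (α * γ / 2 + α + (d:ℝ) - β) * ρ ^ (α * γ / 2 - β) *
            (1 - q)⁻¹ :=
          mul_nonneg (mul_nonneg (Real.rpow_pos_of_pos two_pos _).le
            (Real.rpow_nonneg hρ.le _)) (inv_nonneg.2 (by linarith))
        rw [hctsum, ← ENNReal.ofReal_toReal hVtop, ← mul_assoc, ← ENNReal.ofReal_mul hCnn]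
        congr 1
        congr 1
        rw [ENNReal.toReal_ofReal ENNReal.toReal_nonneg]
        ring
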